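/- For every positive integer k, the smallest eigenvalue μ of the graph H_k satisfies μ < −√(k/2), where H_k consists of a clique on 2k vertices together with one additional vertex adjacent to exactly k of the clique's vertices. -/

import Mathlib

open scoped Matrix

/-- The graph `H k`: a clique on `2k` vertices (indices `< 2k`), together with one extra
vertex (index `2k`) joined to exactly the first `k` vertices of the clique. -/
def Hgraph (k : ℕ) : SimpleGraph (Fin (2 * k + 1)) where
  Adj i j := i ≠ j ∧ ((i.val < 2 * k ∧ j.val < 2 * k) ∨ (i.val = 2 * k ∧ j.val < k) ∨
      (j.val = 2 * k ∧ i.val < k))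
  symm := by
    constructor
    intro i j h
    exact ⟨h.1.symm, by tauto⟩
  loopless := by
    constructor
    intro i h
    exact h.1 rfl

instance (k : ℕ) : DecidableRel (Hgraph k).Adj := fun i j =>
  decidable_of_iff (i ≠ j ∧ ((i.val < 2 * k ∧ j.val < 2 * k) ∨ (i.val = 2 * k ∧ j.val < k) ∨
      (j.val = 2 * k ∧ i.val < k))) Iff.rfl

open Finset in
/-- Splitting a sum over `Fin (2k+1)` into the three natural blocks. -/
lemma sum_fin_split (k : ℕ) (g : ℕ → ℝ) :
    ∑ j : Fin (2 * k + 1), g j.val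
      = (∑ j ∈ range k, g j) + (∑ j ∈ range k, g (k + j)) + g (2 * k) := by
  rw [Fin.sum_univ_eq_sum_range, Finset.sum_range_succ, show 2 * k = k + k by ring,
    Finset.sum_range_add]

/-- The test function on indices. -/
noncomputable def tnat (k : ℕ) : ℕ → ℝ :=
  fun j => if j < k then 1 else if j < 2 * k then -1 else -Real.sqrt (2 * k)

/-- The test vector. -/
noncomputable def tvec (k : ℕ) : Fin (2 * k + 1) → ℝ := fun i => tnat k i.val

/-- Row values of `A *ᵥ tvec`. -/
noncomputable def rnat (k : ℕ) : ℕ → ℝ :=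
  fun j => if j < k then -1 - Real.sqrt (2 * k) else if j < 2 * k then 1 else k

open Finset in
lemma sum_block (k : ℕ) (g : ℕ → ℝ) (c₁ c₂ : ℝ) (h1 : ∀ j < k, g j = c₁)
    (h2 : ∀ j < k, g (k + j) = c₂) :
    ∑ j : Fin (2 * k + 1), g j.val = k * c₁ + k * c₂ + g (2 * k) := by
  rw [sum_fin_split]
  rw [Finset.sum_congr rfl (fun j hj => h1 j (mem_range.mp hj)),
    Finset.sum_congr rfl (fun j hj => h2 j (mem_range.mp hj))]
  simp [mul_comm]

lemma sum_tvec (k : ℕ) :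
    ∑ j : Fin (2 * k + 1), tvec k j = -Real.sqrt (2 * k) := by
  have := sum_block k (tnat k) 1 (-1)
    (fun j hj => by simp [tnat, hj])
    (fun j hj => by
      have h1 : ¬ (k + j < k) := by omega
      have h2 : k + j < 2 * k := by omega
      simp [tnat, h1, h2])
  simp only [tvec] at *
  rw [this]
  have h1 : ¬ (2 * k < k) := by omega
  have h2 : ¬ (2 * k < 2 * k) := by omega
  simp [tnat, h1, h2]

lemma sum_tvec2 (k : ℕ) :
    ∑ j : Fin (2 * k + 1), (if j.val < 2 * k then tvec k j else 0) = 0 := by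
  have := sum_block k (fun j => if j < 2 * k then tnat k j else 0) 1 (-1)
    (fun j hj => by
      have h2 : j < 2 * k := by omega
      simp [tnat, hj, h2])
    (fun j hj => by
      have h1 : ¬ (k + j < k) := by omega
      have h2 : k + j < 2 * k := by omega
      simp [tnat, h1, h2])
  simp only [tvec] at *
  rw [this]
  have h2 : ¬ (2 * k < 2 * k) := by omega
  simp [h2]

lemma sum_tvec1 (k : ℕ) :
    ∑ j : Fin (2 * k + 1), (if j.val < k then tvec k j else 0) = k := by
  have := sum_block k (fun j => if j < k then tnat k j else 0) 1 0
    (fun j hj => by simp [tnat, hj])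
    (fun j hj => by
      have h1 : ¬ (k + j < k) := by omega
      simp [h1])
  simp only [tvec] at *
  rw [this]
  have h1 : ¬ (2 * k < k) := by omega
  simp [h1]

open Finset in
lemma mulVec_tvec (k : ℕ) :
    ((Hgraph k).adjMatrix ℝ) *ᵥ (tvec k) = fun i => rnat k i.val := by
  funext i
  rw [SimpleGraph.adjMatrix_mulVec_apply, SimpleGraph.neighborFinset_eq_filter,
    Finset.sum_filter]
  rcases lt_or_ge i.val k with hik | hik
  · -- i in X : adjacent to everything else
    have hrw : ∀ u : Fin (2 * k + 1),
        (if (Hgraph k).Adj i u then tvec k u else 0)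
          = tvec k u - (if u = i then tvec k u else 0) := by
      intro u
      by_cases hu : u = i
      · subst hu
        simp [Hgraph]
      · have hadj : (Hgraph k).Adj i u := by
          refine ⟨fun h => hu h.symm, ?_⟩
          rcases Nat.lt_succ_iff_lt_or_eq.mp u.isLt with h | h
          · exact Or.inl ⟨by omega, h⟩
          · exact Or.inr (Or.inr ⟨h, hik⟩)
        simp [hadj, hu]
    rw [Finset.sum_congr rfl (fun u _ => hrw u), Finset.sum_sub_distrib,
      Finset.sum_ite_eq' univ i (tvec k)]
    simp only [mem_univ, if_true]
    rw [sum_tvec k]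
    have : tvec k i = 1 := by simp [tvec, tnat, hik]
    rw [this, rnat, if_pos hik]
    ring
  · rcases lt_or_ge i.val (2 * k) with hik2 | hik2
    · -- i in Y : adjacent to everything in the clique except itself
      have hrw : ∀ u : Fin (2 * k + 1),
          (if (Hgraph k).Adj i u then tvec k u else 0)
            = (if u.val < 2 * k then tvec k u else 0)
              - (if u = i then (if u.val < 2 * k then tvec k u else 0) else 0) := by
        intro u
        by_cases hu : u = i
        · subst hu
          simp [Hgraph]
        · by_cases hu2 : u.val < 2 * k
          · have hadj : (Hgraph k).Adj i u :=
              ⟨fun h => hu h.symm, Or.inl ⟨hik2, hu2⟩⟩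
            simp [hadj, hu, hu2]
          · have hnadj : ¬ (Hgraph k).Adj i u := by
              rintro ⟨-, h | h | h⟩
              · exact hu2 h.2
              · omega
              · omega
            simp [hnadj, hu, hu2]
      rw [Finset.sum_congr rfl (fun u _ => hrw u), Finset.sum_sub_distrib,
        Finset.sum_ite_eq' univ i (fun u => if u.val < 2 * k then tvec k u else 0),
        sum_tvec2 k]
      simp only [mem_univ, if_true, if_pos hik2]
      have : tvec k i = -1 := by simp [tvec, tnat, hik2, Nat.not_lt.mpr hik]
      rw [this, rnat, if_neg (Nat.not_lt.mpr hik), if_pos hik2]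
      ring
    · -- i = x₀
      have hival : i.val = 2 * k := by omega
      have hrw : ∀ u : Fin (2 * k + 1),
          (if (Hgraph k).Adj i u then tvec k u else 0)
            = (if u.val < k then tvec k u else 0) := by
        intro u
        by_cases hu : u.val < k
        · have hadj : (Hgraph k).Adj i u := by
            refine ⟨fun h => ?_, Or.inr (Or.inl ⟨hival, hu⟩)⟩
            · rw [← h] at hu; omega
          simp [hadj, hu]
        · have hnadj : ¬ (Hgraph k).Adj i u := by
            rintro ⟨hne, h | h | h⟩
            · omega
            · exact hu h.2
            · omega
          simp [hnadj, hu]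
      rw [Finset.sum_congr rfl (fun u _ => hrw u), sum_tvec1 k]
      simp only [rnat, hival]
      rw [if_neg (by omega : ¬ 2 * k < k), if_neg (by omega : ¬ 2 * k < 2 * k)]

lemma dot_tvec_Av (k : ℕ) :
    (tvec k) ⬝ᵥ (((Hgraph k).adjMatrix ℝ) *ᵥ (tvec k))
      = -2 * k - 2 * k * Real.sqrt (2 * k) := by
  rw [mulVec_tvec, dotProduct]
  have := sum_block k (fun j => tnat k j * rnat k j)
    (-1 - Real.sqrt (2 * k)) (-1)
    (fun j hj => by simp [tnat, rnat, hj])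
    (fun j hj => by
      have h1 : ¬ (k + j < k) := by omega
      have h2 : k + j < 2 * k := by omega
      simp [tnat, rnat, h1, h2])
  simp only [tvec] at *
  rw [this]
  have h1 : ¬ (2 * k < k) := by omega
  have h2 : ¬ (2 * k < 2 * k) := by omega
  simp only [tnat, rnat, if_neg h1, if_neg h2]
  ring

lemma dot_tvec_tvec (k : ℕ) :
    (tvec k) ⬝ᵥ (tvec k) = 4 * k := by
  rw [dotProduct]
  have := sum_block k (fun j => tnat k j * tnat k j) 1 1
    (fun j hj => by simp [tnat, hj])
    (fun j hj => by
      have h1 : ¬ (k + j < k) := by omega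
      have h2 : k + j < 2 * k := by omega
      simp [tnat, h1, h2])
  simp only [tvec] at *
  rw [this]
  have h1 : ¬ (2 * k < k) := by omega
  have h2 : ¬ (2 * k < 2 * k) := by omega
  simp only [tnat, if_neg h1, if_neg h2]
  rw [neg_mul_neg, Real.mul_self_sqrt (by positivity)]
  ring

lemma sqrt_half_mul (k : ℕ) : Real.sqrt ((k : ℝ) / 2) * (4 * k) = 2 * k * Real.sqrt (2 * k) := by
  have h : ((k : ℝ) / 2) = (2 * k) * (1 / 4) := by ring
  have h14 : Real.sqrt (1 / 4) = 1 / 2 := by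
    rw [show (1 / 4 : ℝ) = (1 / 2) ^ 2 by norm_num, Real.sqrt_sq (by norm_num)]
  rw [h, Real.sqrt_mul (by positivity), h14]
  ring

/-- The smallest adjacency eigenvalue `μ` of `H k` satisfies `μ < -√(k/2)`. -/
theorem smallest_eigenvalue_Hgraph (k : ℕ) (hk : 1 ≤ k) (μ : ℝ)
    (hev : ∃ v : Fin (2 * k + 1) → ℝ, v ≠ 0 ∧ ((Hgraph k).adjMatrix ℝ).mulVec v = μ • v)
    (hmin : ∀ (μ' : ℝ) (v : Fin (2 * k + 1) → ℝ), v ≠ 0 →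
      ((Hgraph k).adjMatrix ℝ).mulVec v = μ' • v → μ ≤ μ') :
    μ < -Real.sqrt (k / 2) := by
  classical
  set s : ℝ := Real.sqrt (k / 2) with hs
  set A : Matrix (Fin (2 * k + 1)) (Fin (2 * k + 1)) ℝ := (Hgraph k).adjMatrix ℝ with hA
  have hAh : A.IsHermitian := by
    rw [Matrix.IsHermitian, Matrix.conjTranspose_eq_transpose_of_trivial]
    exact SimpleGraph.isSymm_adjMatrix (Hgraph k)
  set B : Matrix (Fin (2 * k + 1)) (Fin (2 * k + 1)) ℝ := A + s • (1 : Matrix _ _ ℝ) with hB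
  have hBh : B.IsHermitian := by
    apply hAh.add
    rw [Matrix.IsHermitian, Matrix.conjTranspose_smul, Matrix.conjTranspose_one, star_trivial]
  have hBv : B *ᵥ (tvec k) = A *ᵥ (tvec k) + s • (tvec k) := by
    rw [hB, Matrix.add_mulVec, Matrix.smul_mulVec, Matrix.one_mulVec]
  have hdot : (tvec k) ⬝ᵥ (B *ᵥ tvec k) = -2 * k := by
    rw [hBv, dotProduct_add, dotProduct_smul, dot_tvec_Av, dot_tvec_tvec,
      smul_eq_mul, hs, sqrt_half_mul]
    ring
  have hneg : ∃ i, hBh.eigenvalues i < 0 := by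
    by_contra hcon
    push_neg at hcon
    have hpsd := hBh.posSemidef_iff_eigenvalues_nonneg.mpr hcon
    have h2 := hpsd.dotProduct_mulVec_nonneg (tvec k)
    rw [star_trivial, hdot] at h2
    have : (0 : ℝ) < 2 * k := by positivity
    linarith
  obtain ⟨i, hi⟩ := hneg
  set v : Fin (2 * k + 1) → ℝ := ⇑(hBh.eigenvectorBasis i) with hv
  have hmv : B *ᵥ v = hBh.eigenvalues i • v := hBh.mulVec_eigenvectorBasis i
  have hAv : A *ᵥ v = (hBh.eigenvalues i - s) • v := by
    have h1 : A *ᵥ v = B *ᵥ v - s • v := by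
      rw [hB, Matrix.add_mulVec, Matrix.smul_mulVec, Matrix.one_mulVec]
      abel
    rw [h1, hmv, sub_smul]
  have hvne : v ≠ 0 := by
    intro h0
    have hb0 : hBh.eigenvectorBasis i = 0 := (WithLp.ofLp_eq_zero (p := 2)).mp h0
    have := hBh.eigenvectorBasis.toBasis.ne_zero i
    rw [OrthonormalBasis.coe_toBasis] at this
    exact this hb0
  have hle := hmin _ v hvne hAv
  have hs0 : 0 ≤ s := Real.sqrt_nonneg _
  linarith
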